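/- arXiv:1707.06204 — 4 statements merged into one kernel-verified Lean document; each statement's English description precedes it below -/
import Mathlib

section
/- Let T_n be the characteristic time, i.e., the unique solution of Σ_{i=1}^n Ĝ_i(T_n) = C_n with 0 < C_n < n. Then for any n₂ ≤ C_n, T_n ≥ (C_n - n₂) / (Λ_n · P̄_n(n₂)), where Λ_n = Σᵢ λ_i and P̄_n(n₂) = Σ_{k > n₂} λ_{σ_k}/Λ_n is the aggregate popularity of the n - n₂ least popular contents (σ orders p_i = λ_i/Λ_n decreasingly). -/
open MeasureTheory Filter Set

/-- Lower bound on the characteristic time: if `Σᵢ Ĝᵢ(T) = C` with `0 < C < n`,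
then for any `n₂ ≤ C`, `T ≥ (C - n₂) / (Λ · P̄(n₂))` where `Λ = Σᵢ λᵢ` and
`P̄(n₂)` is the aggregate popularity of the `n - n₂` least popular contents. -/
theorem stmt_4 (n : ℕ) (G : Fin n → ℝ → ℝ) (lam : Fin n → ℝ)
    (hlam : ∀ i, 0 < lam i)
    (hCont : ∀ i, Continuous (G i))
    (hMono : ∀ i, Monotone (G i))
    (hle : ∀ i t, G i t ≤ 1) (hge : ∀ i t, 0 ≤ G i t)
    (hsupp : ∀ i, ∀ t ≤ 0, G i t = 0)
    (hInt : ∀ i, IntegrableOn (fun z => 1 - G i z) (Set.Ioi 0))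
    (hmean : ∀ i, (∫ z in Set.Ioi (0:ℝ), (1 - G i z)) = 1 / lam i)
    (Ghat : Fin n → ℝ → ℝ)
    (hGhat : ∀ i t, Ghat i t = lam i * ∫ z in (0:ℝ)..t, (1 - G i z))
    (σ : Equiv.Perm (Fin n))
    (hσ : ∀ j k : Fin n, j ≤ k → lam (σ k) ≤ lam (σ j))
    (Λ : ℝ) (hΛ : Λ = ∑ i, lam i)
    (Pbar : ℕ → ℝ)
    (hPbar : ∀ m : ℕ, Pbar m = ∑ k ∈ Finset.univ.filter (fun k : Fin n => m ≤ (k : ℕ)), lam (σ k) / Λ)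
    (C T : ℝ) (hC0 : 0 < C) (hCn : C < n)
    (hT0 : 0 ≤ T) (hT : ∑ i, Ghat i T = C)
    (n₂ : ℕ) (hn₂ : (n₂ : ℝ) ≤ C) :
    T ≥ (C - n₂) / (Λ * Pbar n₂) := by
  have hn₂n : n₂ < n := by exact_mod_cast hn₂.trans_lt hCn
  have hΛpos : 0 < Λ := by
    rw [hΛ]
    exact Finset.sum_pos (fun i _ => hlam i) ⟨⟨n₂, hn₂n⟩, Finset.mem_univ _⟩
  -- integrability on Ioc 0 T
  have hIntT : ∀ i, IntegrableOn (fun z => 1 - G i z) (Set.Ioc 0 T) := fun i =>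
    (hInt i).mono_set Set.Ioc_subset_Ioi_self
  have hIntI : ∀ i, IntervalIntegrable (fun z => 1 - G i z) volume 0 T := by
    intro i
    rw [intervalIntegrable_iff_integrableOn_Ioc_of_le hT0]
    exact hIntT i
  -- Ghat i T ≤ 1
  have hGhat1 : ∀ i, Ghat i T ≤ 1 := by
    intro i
    rw [hGhat]
    have h1 : (∫ z in (0:ℝ)..T, (1 - G i z)) ≤ ∫ z in Set.Ioi (0:ℝ), (1 - G i z) := by
      rw [intervalIntegral.integral_of_le hT0]
      refine setIntegral_mono_set (hInt i) ?_ ?_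
      · filter_upwards with z using by simpa using hle i z
      · exact Filter.Eventually.of_forall Set.Ioc_subset_Ioi_self
    calc lam i * ∫ z in (0:ℝ)..T, (1 - G i z)
        ≤ lam i * (1 / lam i) := by
          apply mul_le_mul_of_nonneg_left _ (hlam i).le
          rw [← hmean i]; exact h1
      _ = 1 := mul_one_div_cancel (hlam i).ne'
  -- Ghat i T ≤ lam i * T
  have hGhatT : ∀ i, Ghat i T ≤ lam i * T := by
    intro i
    rw [hGhat]
    apply mul_le_mul_of_nonneg_left _ (hlam i).le
    calc (∫ z in (0:ℝ)..T, (1 - G i z))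
        ≤ ∫ z in (0:ℝ)..T, (1:ℝ) := by
          apply intervalIntegral.integral_mono_on hT0 (hIntI i) intervalIntegrable_const
          intro x _
          have := hge i x
          linarith
      _ = T := by simp
  -- Ghat nonneg
  -- rewrite sum via permutation and split
  have hsum : ∑ i, Ghat i T = ∑ k, Ghat (σ k) T := (Equiv.sum_comp σ (fun i => Ghat i T)).symm
  set s := Finset.univ.filter (fun k : Fin n => n₂ ≤ (k : ℕ)) with hs
  have hsplit : ∑ k, Ghat (σ k) T =
      (∑ k ∈ Finset.univ.filter (fun k : Fin n => ¬ n₂ ≤ (k : ℕ)), Ghat (σ k) T)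
      + ∑ k ∈ s, Ghat (σ k) T := by
    rw [hs, ← Finset.sum_filter_add_sum_filter_not Finset.univ (fun k : Fin n => n₂ ≤ (k : ℕ))]
    ring
  -- bound first part by n₂
  have hcard : (Finset.univ.filter (fun k : Fin n => ¬ n₂ ≤ (k : ℕ))).card ≤ n₂ := by
    have : (Finset.univ.filter (fun k : Fin n => ¬ n₂ ≤ (k : ℕ))).card
        ≤ (Finset.range n₂).card := by
      refine Finset.card_le_card_of_injOn (fun k : Fin n => (k : ℕ)) ?_ ?_
      · intro k hk
        simp only [Finset.mem_coe, Finset.mem_filter, not_le] at hk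
        simpa using hk.2
      · intro a _ b _ h
        exact Fin.ext h
    simpa using this
  have hpart1 : (∑ k ∈ Finset.univ.filter (fun k : Fin n => ¬ n₂ ≤ (k : ℕ)), Ghat (σ k) T)
      ≤ (n₂ : ℝ) := by
    calc (∑ k ∈ Finset.univ.filter (fun k : Fin n => ¬ n₂ ≤ (k : ℕ)), Ghat (σ k) T)
        ≤ ∑ _k ∈ Finset.univ.filter (fun k : Fin n => ¬ n₂ ≤ (k : ℕ)), (1:ℝ) :=
          Finset.sum_le_sum (fun k _ => hGhat1 (σ k))
      _ = (Finset.univ.filter (fun k : Fin n => ¬ n₂ ≤ (k : ℕ))).card := by simp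
      _ ≤ (n₂ : ℝ) := by exact_mod_cast hcard
  -- the second part
  have hΛP : Λ * Pbar n₂ = ∑ k ∈ s, lam (σ k) := by
    rw [hPbar, Finset.mul_sum]
    refine Finset.sum_congr rfl (fun k _ => ?_)
    field_simp
  have hpart2 : (∑ k ∈ s, Ghat (σ k) T) ≤ (Λ * Pbar n₂) * T := by
    rw [hΛP, Finset.sum_mul]
    exact Finset.sum_le_sum (fun k _ => hGhatT (σ k))
  have hΛPpos : 0 < Λ * Pbar n₂ := by
    rw [hΛP]
    refine Finset.sum_pos (fun k _ => hlam (σ k)) ⟨⟨n₂, hn₂n⟩, ?_⟩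
    simp [hs]
  have hmain : C - n₂ ≤ (Λ * Pbar n₂) * T := by
    have := hT
    rw [hsum, hsplit] at this
    linarith
  rw [ge_iff_le, div_le_iff₀ hΛPpos]
  linarith
end

section
/- Assume additionally that there is a continuous cdf Ψ supported on [0,∞) with mean m_Ψ > 0 such that Ĝ_i(t) ≥ m_Ψ Ψ̂(λ_i t) for all i and t, where Ψ̂(t) = (1/m_Ψ)∫₀ᵗ (1-Ψ(z))dz. Then for any n₁ with C_n/m_Ψ < n₁ ≤ n and any ν₀ with Ψ̂(ν₀) ≥ C_n/(n₁ m_Ψ), the characteristic time satisfies T_n ≤ ν₀/λ_{σ_{n₁}}. -/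
open MeasureTheory Filter Set

lemma aux_mono_int (f : ℝ → ℝ) (hf : Continuous f) (h0 : ∀ z, 0 ≤ f z) :
    Monotone (fun t => ∫ z in (0:ℝ)..t, f z) := by
  intro a b hab
  have h1 : (∫ z in (0:ℝ)..b, f z) - (∫ z in (0:ℝ)..a, f z) = ∫ z in a..b, f z :=
    intervalIntegral.integral_interval_sub_left
      (hf.intervalIntegrable _ _) (hf.intervalIntegrable _ _)
  have h2 : 0 ≤ ∫ z in a..b, f z :=
    intervalIntegral.integral_nonneg hab (fun x _ => h0 x)
  linarith


/-- Upper bound on the characteristic time: under the lower bound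
`Ĝᵢ(t) ≥ m_Ψ Ψ̂(λᵢ t)`, for any `n₁` with `C/m_Ψ < n₁ ≤ n` and any `ν₀` with
`Ψ̂(ν₀) ≥ C/(n₁ m_Ψ)`, one has `T ≤ ν₀ / λ_{σ(n₁)}`. -/
theorem stmt_5 (n : ℕ) (G : Fin n → ℝ → ℝ) (lam : Fin n → ℝ)
    (hlam : ∀ i, 0 < lam i)
    (hCont : ∀ i, Continuous (G i))
    (hMono : ∀ i, Monotone (G i))
    (hle : ∀ i t, G i t ≤ 1) (hge : ∀ i t, 0 ≤ G i t)
    (hsupp : ∀ i, ∀ t ≤ 0, G i t = 0)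
    (hInt : ∀ i, IntegrableOn (fun z => 1 - G i z) (Set.Ioi 0))
    (hmean : ∀ i, (∫ z in Set.Ioi (0:ℝ), (1 - G i z)) = 1 / lam i)
    (Ghat : Fin n → ℝ → ℝ)
    (hGhat : ∀ i t, Ghat i t = lam i * ∫ z in (0:ℝ)..t, (1 - G i z))
    (σ : Equiv.Perm (Fin n))
    (hσ : ∀ j k : Fin n, j ≤ k → lam (σ k) ≤ lam (σ j))
    -- the comparison cdf Ψ and its equilibrium distribution Ψ̂
    (Ψ : ℝ → ℝ) (mΨ : ℝ)
    (hΨCont : Continuous Ψ) (hΨMono : Monotone Ψ)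
    (hΨle : ∀ t, Ψ t ≤ 1) (hΨge : ∀ t, 0 ≤ Ψ t)
    (hΨsupp : ∀ t ≤ 0, Ψ t = 0)
    (hΨInt : IntegrableOn (fun z => 1 - Ψ z) (Set.Ioi 0))
    (hmΨ : mΨ = ∫ z in Set.Ioi (0:ℝ), (1 - Ψ z)) (hmΨ_pos : 0 < mΨ)
    (Ψhat : ℝ → ℝ)
    (hΨhat : ∀ t, Ψhat t = (1 / mΨ) * ∫ z in (0:ℝ)..t, (1 - Ψ z))
    (hbound : ∀ i t, 0 ≤ t → mΨ * Ψhat (lam i * t) ≤ Ghat i t)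
    -- characteristic time
    (C T : ℝ) (hC0 : 0 < C) (hCn : C < n)
    (hT0 : 0 ≤ T) (hT : ∑ i, Ghat i T = C)
    -- the index n₁ (1-indexed position (n₁ : ℕ) + 1) and ν₀
    (n₁ : Fin n) (hn₁ : C / mΨ < (n₁ : ℕ) + 1)
    (ν₀ : ℝ) (hν₀ : Ψhat ν₀ ≥ C / (((n₁ : ℕ) + 1) * mΨ)) :
    T ≤ ν₀ / lam (σ n₁) := by
  by_contra hcon
  push_neg at hcon
  set ν := ν₀ / lam (σ n₁) with hν_def
  -- Ψhat is monotone
  have hΨ1cont : Continuous (fun z => 1 - Ψ z) := continuous_const.sub hΨCont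
  have hΨ1nn : ∀ z, 0 ≤ 1 - Ψ z := fun z => by linarith [hΨle z]
  have hΨhatMono : Monotone Ψhat := by
    intro a b hab
    rw [hΨhat a, hΨhat b]
    exact mul_le_mul_of_nonneg_left (aux_mono_int _ hΨ1cont hΨ1nn hab) (by positivity)
  -- Ψhat ν₀ > 0
  have hn₁pos : (0:ℝ) < (n₁ : ℕ) + 1 := by positivity
  have hΨν₀pos : 0 < Ψhat ν₀ := lt_of_lt_of_le (by positivity) hν₀
  -- ν₀ > 0
  have hν₀pos : 0 < ν₀ := by
    by_contra h
    push_neg at h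
    have : Ψhat ν₀ ≤ Ψhat 0 := hΨhatMono h
    rw [hΨhat 0, intervalIntegral.integral_same, mul_zero] at this
    linarith
  have hνpos : 0 < ν := div_pos hν₀pos (hlam _)
  have hνT : ν < T := hcon
  -- monotonicity of each Ghat
  have hGhatMono : ∀ i, Monotone (Ghat i) := by
    intro i a b hab
    rw [hGhat i a, hGhat i b]
    exact mul_le_mul_of_nonneg_left
      (aux_mono_int (fun z => 1 - G i z) (continuous_const.sub (hCont i))
        (fun z => sub_nonneg.mpr (hle i z)) hab) (hlam i).le
  -- lower bound on Ghat (σ j) ν for j ≤ n₁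
  have hkey : ∀ j : Fin n, j ≤ n₁ → C / ((n₁ : ℕ) + 1) ≤ Ghat (σ j) ν := by
    intro j hj
    have hlamj : lam (σ n₁) ≤ lam (σ j) := hσ j n₁ hj
    have h1 : ν₀ ≤ lam (σ j) * ν := by
      have : lam (σ n₁) * ν = ν₀ := by
        rw [hν_def, ← mul_div_assoc, mul_comm, mul_div_assoc, div_self (hlam (σ n₁)).ne', mul_one]
      nlinarith [hνpos.le]
    have h2 : Ψhat ν₀ ≤ Ψhat (lam (σ j) * ν) := hΨhatMono h1
    have h3 : mΨ * Ψhat (lam (σ j) * ν) ≤ Ghat (σ j) ν := hbound _ _ hνpos.le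
    have h4 : C / (((n₁ : ℕ) + 1) * mΨ) * mΨ = C / ((n₁ : ℕ) + 1) := by
      field_simp
    nlinarith [hν₀, hmΨ_pos]
  -- Ghat i ν ≥ 0
  have hGhatnn : ∀ i, 0 ≤ Ghat i ν := by
    intro i
    rw [hGhat]
    have : 0 ≤ ∫ z in (0:ℝ)..ν, (1 - G i z) :=
      intervalIntegral.integral_nonneg hνpos.le (fun x _ => by linarith [hle i x])
    exact mul_nonneg (hlam i).le this
  -- sum lower bound: ∑ Ghat i ν ≥ C
  have hsum : C ≤ ∑ i, Ghat i ν := by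
    have hperm : ∑ i, Ghat i ν = ∑ i, Ghat (σ i) ν := (Equiv.sum_comp σ (fun i => Ghat i ν)).symm
    rw [hperm]
    have hsub : ∑ j ∈ Finset.Iic n₁, Ghat (σ j) ν ≤ ∑ i, Ghat (σ i) ν :=
      Finset.sum_le_sum_of_subset_of_nonneg (Finset.subset_univ _) (fun i _ _ => hGhatnn (σ i))
    have hlb : (Finset.Iic n₁).card • (C / ((n₁ : ℕ) + 1)) ≤ ∑ j ∈ Finset.Iic n₁, Ghat (σ j) ν :=
      Finset.card_nsmul_le_sum _ _ _ (fun j hj => hkey j (Finset.mem_Iic.mp hj))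
    rw [Fin.card_Iic] at hlb
    have : ((n₁ : ℕ) + 1 : ℕ) • (C / ((n₁ : ℕ) + 1)) = C := by
      rw [nsmul_eq_mul]
      push_cast
      field_simp
    linarith [this ▸ hlb]
  -- but ∑ Ghat i ν ≤ ∑ Ghat i T = C, so equality termwise
  have hub : ∑ i, Ghat i ν ≤ C := hT ▸ Finset.sum_le_sum (fun i _ => hGhatMono i hνT.le)
  have hsumeq : ∑ i, Ghat i ν = ∑ i, Ghat i T := by rw [hT]; linarith
  have heach : ∀ i : Fin n, Ghat i ν = Ghat i T := by
    intro i
    exact (Finset.sum_eq_sum_iff_of_le (fun i _ => hGhatMono i hνT.le)).mp hsumeq i (Finset.mem_univ i)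
  -- from termwise equality: each Ghat i T = 1
  have hone : ∀ i : Fin n, Ghat i T = 1 := by
    intro i
    set μ := (ν + T) / 2 with hμ
    have hνμ : ν < μ := by simp [hμ]; linarith
    have hμT : μ < T := by simp [hμ]; linarith
    have hcont1 : Continuous (fun z => 1 - G i z) := continuous_const.sub (hCont i)
    have hintzero : (∫ z in ν..T, (1 - G i z)) = 0 := by
      have h1 : (∫ z in (0:ℝ)..T, (1 - G i z)) - (∫ z in (0:ℝ)..ν, (1 - G i z)) = ∫ z in ν..T, (1 - G i z) :=
        intervalIntegral.integral_interval_sub_left (hcont1.intervalIntegrable _ _) (hcont1.intervalIntegrable _ _)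
      have h2 := heach i
      rw [hGhat i ν, hGhat i T] at h2
      have hl := (hlam i).ne'
      have : (∫ z in (0:ℝ)..ν, (1 - G i z)) = ∫ z in (0:ℝ)..T, (1 - G i z) :=
        mul_left_cancel₀ hl h2
      linarith
    -- G i μ = 1
    have hGμ : G i μ = 1 := by
      by_contra h
      have hlt : G i μ < 1 := lt_of_le_of_ne (hle i μ) h
      have hpos : 0 < ∫ z in ν..μ, (1 - G i z) := by
        apply intervalIntegral.intervalIntegral_pos_of_pos_on (hcont1.intervalIntegrable _ _) _ hνμ
        intro x hx
        have : G i x ≤ G i μ := hMono i hx.2.le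
        linarith
      have hrest : 0 ≤ ∫ z in μ..T, (1 - G i z) :=
        intervalIntegral.integral_nonneg hμT.le (fun x _ => by linarith [hle i x])
      have hsplit : (∫ z in ν..μ, (1 - G i z)) + (∫ z in μ..T, (1 - G i z)) = ∫ z in ν..T, (1 - G i z) :=
        intervalIntegral.integral_add_adjacent_intervals (hcont1.intervalIntegrable _ _) (hcont1.intervalIntegrable _ _)
      linarith
    -- G i z = 1 for z ≥ μ
    have hGone : ∀ z, μ ≤ z → G i z = 1 := fun z hz =>
      le_antisymm (hle i z) (hGμ ▸ hMono i hz)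
    -- ∫ over Ioi 0 equals ∫ from 0 to μ
    have hμpos : 0 < μ := lt_trans hνpos hνμ
    have hIoi : (∫ z in Set.Ioi (0:ℝ), (1 - G i z)) = ∫ z in (0:ℝ)..μ, (1 - G i z) := by
      rw [intervalIntegral.integral_of_le hμpos.le]
      have hunion : Set.Ioc (0:ℝ) μ ∪ Set.Ioi μ = Set.Ioi 0 := Set.Ioc_union_Ioi_eq_Ioi hμpos.le
      have hdisj : Disjoint (Set.Ioc (0:ℝ) μ) (Set.Ioi μ) := Set.Ioc_disjoint_Ioi le_rfl
      have hint1 : IntegrableOn (fun z => 1 - G i z) (Set.Ioc (0:ℝ) μ) :=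
        (hInt i).mono_set (by rw [← hunion]; exact Set.subset_union_left)
      have hint2 : IntegrableOn (fun z => 1 - G i z) (Set.Ioi μ) :=
        (hInt i).mono_set (by rw [← hunion]; exact Set.subset_union_right)
      have hz2 : (∫ z in Set.Ioi μ, (1 - G i z)) = 0 := by
        apply MeasureTheory.setIntegral_eq_zero_of_forall_eq_zero
        intro x hx
        rw [hGone x (le_of_lt hx)]
        ring
      calc (∫ z in Set.Ioi (0:ℝ), (1 - G i z))
          = (∫ z in Set.Ioc (0:ℝ) μ, (1 - G i z)) + ∫ z in Set.Ioi μ, (1 - G i z) := by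
            rw [← MeasureTheory.setIntegral_union hdisj measurableSet_Ioi hint1 hint2, hunion]
        _ = ∫ z in Set.Ioc (0:ℝ) μ, (1 - G i z) := by rw [hz2, add_zero]
    -- Ghat i μ = 1
    have hGhatμ : Ghat i μ = 1 := by
      rw [hGhat i μ, ← hIoi, hmean i, mul_one_div, div_self (hlam i).ne']
    -- squeeze
    have h1 : Ghat i ν ≤ Ghat i μ := hGhatMono i hνμ.le
    have h2 : Ghat i μ ≤ Ghat i T := hGhatMono i hμT.le
    have := heach i
    linarith [hGhatμ ▸ h1, hGhatμ ▸ h2]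
  -- conclude C = n, contradiction
  have : (C : ℝ) = n := by
    rw [← hT]
    simp [hone]
  linarith
end

section
/- Under the assumptions of the previous statement, for each β₀ ∈ (0,1) there is a unique ν₀ ∈ (0,∞) with ∫₀¹ Ψ̂(ν₀ f(x)) dx = β₀. -/
open MeasureTheory Filter Set

/-- For each `β₀ ∈ (0,1)` there is a unique `ν₀ ∈ (0,∞)` with
`∫₀¹ Ψ̂(ν₀ f(x)) dx = β₀`. -/
theorem stmt_12 (Ψ : ℝ → ℝ) (mΨ : ℝ)
    (hΨCont : Continuous Ψ) (hΨMono : Monotone Ψ)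
    (hΨle : ∀ t, Ψ t ≤ 1) (hΨge : ∀ t, 0 ≤ Ψ t)
    (hΨsupp : ∀ t ≤ 0, Ψ t = 0)
    (hΨTop : Tendsto Ψ atTop (nhds 1))
    (hΨInt : IntegrableOn (fun z => 1 - Ψ z) (Set.Ioi 0))
    (hmΨ : mΨ = ∫ z in Set.Ioi (0:ℝ), (1 - Ψ z)) (hmΨ_pos : 0 < mΨ)
    (Ψhat : ℝ → ℝ)
    (hΨhat : ∀ t, Ψhat t = (1 / mΨ) * ∫ z in (0:ℝ)..t, (1 - Ψ z))
    (f : ℝ → ℝ) (hfMeas : Measurable f)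
    (hfCont : ContinuousOn f (Set.Ioc 0 1))
    (hfnonneg : ∀ x ∈ Set.Ioc (0:ℝ) 1, 0 ≤ f x)
    (hfpos : ∀ᵐ x ∂(volume.restrict (Set.Ioc (0:ℝ) 1)), 0 < f x)
    (β : ℝ → ℝ)
    (hβ : ∀ ν, β ν = ∫ x in Set.Ioc (0:ℝ) 1, Ψhat (ν * f x)) :
    ∀ β₀ ∈ Set.Ioo (0:ℝ) 1, ∃! ν : ℝ, 0 < ν ∧ β ν = β₀ := by
  intro β₀ hβ₀
  obtain ⟨hβ₀0, hβ₀1⟩ := hβ₀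
  set g : ℝ → ℝ := fun z => 1 - Ψ z with hg
  have hgcont : Continuous g := continuous_const.sub hΨCont
  have hgnn : ∀ z, 0 ≤ g z := fun z => sub_nonneg.2 (hΨle z)
  have hgint : ∀ a b : ℝ, IntervalIntegrable g volume a b :=
    fun a b => hgcont.intervalIntegrable a b
  have hm_ne : mΨ ≠ 0 := ne_of_gt hmΨ_pos
  -- Ψhat basics
  have hΨhat0 : Ψhat 0 = 0 := by simp [hΨhat]
  have hΨhatCont : Continuous Ψhat := by
    have h1 : Continuous fun t : ℝ => ∫ z in (0:ℝ)..t, g z :=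
      intervalIntegral.continuous_primitive (fun a b => hgint a b) 0
    have : Ψhat = fun t => (1 / mΨ) * ∫ z in (0:ℝ)..t, g z := funext hΨhat
    rw [this]
    exact continuous_const.mul h1
  have hΨhatMono : ∀ s t : ℝ, s ≤ t → Ψhat s ≤ Ψhat t := by
    intro s t hst
    rw [hΨhat s, hΨhat t]
    have hadd : (∫ z in (0:ℝ)..s, g z) + ∫ z in s..t, g z = ∫ z in (0:ℝ)..t, g z :=
      intervalIntegral.integral_add_adjacent_intervals (hgint 0 s) (hgint s t)
    have hpos : 0 ≤ ∫ z in s..t, g z :=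
      intervalIntegral.integral_nonneg hst fun u _ => hgnn u
    have : (∫ z in (0:ℝ)..s, g z) ≤ ∫ z in (0:ℝ)..t, g z := by linarith
    have h1m : (0:ℝ) ≤ 1 / mΨ := by positivity
    exact mul_le_mul_of_nonneg_left this h1m
  have hΨhatNN : ∀ t : ℝ, 0 ≤ t → 0 ≤ Ψhat t := by
    intro t ht
    rw [← hΨhat0]; exact hΨhatMono 0 t ht
  have hΨhatLe : ∀ t : ℝ, 0 ≤ t → Ψhat t ≤ 1 := by
    intro t ht
    rw [hΨhat t, intervalIntegral.integral_of_le ht]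
    have hsub : (∫ z in Ioc (0:ℝ) t, g z) ≤ ∫ z in Ioi (0:ℝ), g z := by
      apply setIntegral_mono_set hΨInt
      · exact Eventually.of_forall fun z => hgnn z
      · exact HasSubset.Subset.eventuallyLE Ioc_subset_Ioi_self
    rw [← hmΨ] at hsub
    calc 1 / mΨ * ∫ z in Ioc (0:ℝ) t, g z ≤ 1 / mΨ * mΨ := by
          apply mul_le_mul_of_nonneg_left hsub (by positivity)
      _ = 1 := by field_simp
  have hΨhatTop : Tendsto Ψhat atTop (nhds 1) := by
    have h1 : Tendsto (fun t : ℝ => ∫ z in (0:ℝ)..t, g z) atTop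
        (nhds (∫ z in Ioi (0:ℝ), g z)) :=
      intervalIntegral_tendsto_integral_Ioi 0 hΨInt tendsto_id
    have h2 : Tendsto (fun t : ℝ => (1 / mΨ) * ∫ z in (0:ℝ)..t, g z) atTop
        (nhds ((1 / mΨ) * ∫ z in Ioi (0:ℝ), g z)) := h1.const_mul _
    have heq : (1 / mΨ) * ∫ z in Ioi (0:ℝ), g z = 1 := by
      rw [← hmΨ]; field_simp
    rw [heq] at h2
    have : Ψhat = fun t => (1 / mΨ) * ∫ z in (0:ℝ)..t, g z := funext hΨhat
    rw [this]; exact h2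
  -- integrand integrability
  have hmeas : ∀ ν : ℝ, AEStronglyMeasurable (fun x => Ψhat (ν * f x))
      (volume.restrict (Ioc (0:ℝ) 1)) :=
    fun ν => (hΨhatCont.measurable.comp ((measurable_const.mul hfMeas))).aestronglyMeasurable
  have hbound : ∀ ν : ℝ, 0 ≤ ν → ∀ᵐ x ∂(volume.restrict (Ioc (0:ℝ) 1)),
      ‖Ψhat (ν * f x)‖ ≤ 1 := by
    intro ν hν
    filter_upwards [ae_restrict_mem measurableSet_Ioc] with x hx
    have h0 : 0 ≤ ν * f x := mul_nonneg hν (hfnonneg x hx)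
    rw [Real.norm_eq_abs, abs_le]
    exact ⟨by linarith [hΨhatNN _ h0], hΨhatLe _ h0⟩
  have hint : ∀ ν : ℝ, 0 ≤ ν → IntegrableOn (fun x => Ψhat (ν * f x)) (Ioc (0:ℝ) 1) := by
    intro ν hν
    exact Integrable.mono' (integrable_const 1) (hmeas ν) (hbound ν hν)
  -- β monotone on nonnegatives
  have hβmono : ∀ ν₁ ν₂ : ℝ, 0 ≤ ν₁ → ν₁ ≤ ν₂ → β ν₁ ≤ β ν₂ := by
    intro ν₁ ν₂ h1 h12
    rw [hβ, hβ]
    apply integral_mono_ae (hint ν₁ h1) (hint ν₂ (h1.trans h12))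
    filter_upwards [ae_restrict_mem measurableSet_Ioc] with x hx
    exact hΨhatMono _ _ (mul_le_mul_of_nonneg_right h12 (hfnonneg x hx))
  -- continuity of β at positive points
  have hβcont : ∀ ν₀ : ℝ, 0 < ν₀ → ContinuousAt β ν₀ := by
    intro ν₀ hν₀
    have hβeq : β = fun ν => ∫ x in Ioc (0:ℝ) 1, Ψhat (ν * f x) := funext hβ
    rw [hβeq]
    apply continuousAt_of_dominated (bound := fun _ => (1:ℝ))
    · exact Eventually.of_forall fun ν => hmeas ν
    · filter_upwards [eventually_gt_nhds hν₀] with ν hν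
      exact hbound ν hν.le
    · simp [Real.volume_Ioc]
    · exact Eventually.of_forall fun x =>
        (hΨhatCont.comp (continuous_mul_right (f x))).continuousAt
  -- limit at 0+
  have hβ0 : Tendsto β (nhdsWithin 0 (Ioi 0)) (nhds 0) := by
    have hβeq : β = fun ν => ∫ x in Ioc (0:ℝ) 1, Ψhat (ν * f x) := funext hβ
    rw [hβeq]
    have key := tendsto_integral_filter_of_dominated_convergence
      (μ := volume.restrict (Ioc (0:ℝ) 1)) (F := fun (ν : ℝ) x => Ψhat (ν * f x))
      (f := fun _ => (0:ℝ)) (l := nhdsWithin (0:ℝ) (Ioi 0)) (bound := fun _ => (1:ℝ))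
      (Eventually.of_forall fun ν => hmeas ν)
      (by filter_upwards [self_mem_nhdsWithin] with ν hν
          exact hbound ν (le_of_lt hν))
      (by simp [Real.volume_Ioc])
      (by apply Eventually.of_forall
          intro x
          have : Tendsto (fun ν : ℝ => Ψhat (ν * f x)) (nhds 0) (nhds (Ψhat (0 * f x))) :=
            (hΨhatCont.comp (continuous_mul_right (f x))).continuousAt
          rw [zero_mul, hΨhat0] at this
          exact this.mono_left nhdsWithin_le_nhds)
    simpa using key
  -- limit at top
  have hβtop : Tendsto β atTop (nhds 1) := by
    have hβeq : β = fun ν => ∫ x in Ioc (0:ℝ) 1, Ψhat (ν * f x) := funext hβ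
    rw [hβeq]
    have key := tendsto_integral_filter_of_dominated_convergence
      (μ := volume.restrict (Ioc (0:ℝ) 1)) (F := fun (ν : ℝ) x => Ψhat (ν * f x))
      (f := fun _ => (1:ℝ)) (l := atTop) (bound := fun _ => (1:ℝ))
      (Eventually.of_forall fun ν => hmeas ν)
      (by filter_upwards [eventually_ge_atTop (0:ℝ)] with ν hν
          exact hbound ν hν)
      (by simp [Real.volume_Ioc])
      (by filter_upwards [hfpos] with x hfx
          exact hΨhatTop.comp (tendsto_id.atTop_mul_const hfx))
    simpa [Real.volume_Ioc] using key
  -- existence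
  have hex : ∃ ν : ℝ, 0 < ν ∧ β ν = β₀ := by
    have hsmall : ∃ a : ℝ, 0 < a ∧ β a < β₀ := by
      have : ∀ᶠ ν in nhdsWithin (0:ℝ) (Ioi 0), β ν < β₀ :=
        hβ0.eventually (eventually_lt_nhds hβ₀0)
      have h2 : ∀ᶠ ν in nhdsWithin (0:ℝ) (Ioi 0), 0 < ν ∧ β ν < β₀ :=
        (eventually_mem_nhdsWithin.mono fun ν h => h).and this
      obtain ⟨a, ha1, ha2⟩ := h2.exists
      exact ⟨a, ha1, ha2⟩
    obtain ⟨a, ha0, haβ⟩ := hsmall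
    have hlarge : ∃ b : ℝ, a < b ∧ β₀ < β b := by
      have : ∀ᶠ ν in atTop, β₀ < β ν := hβtop.eventually (eventually_gt_nhds hβ₀1)
      have h2 : ∀ᶠ ν in atTop, a < ν ∧ β₀ < β ν := (eventually_gt_atTop a).and this
      obtain ⟨b, hb1, hb2⟩ := h2.exists
      exact ⟨b, hb1, hb2⟩
    obtain ⟨b, hab, hbβ⟩ := hlarge
    have hconts : ContinuousOn β (Icc a b) := fun x hx =>
      ((hβcont x (lt_of_lt_of_le ha0 hx.1)).continuousWithinAt)
    have hmem : β₀ ∈ Icc (β a) (β b) := ⟨haβ.le, hbβ.le⟩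
    obtain ⟨ν, hν1, hν2⟩ := intermediate_value_Icc hab.le hconts hmem
    exact ⟨ν, lt_of_lt_of_le ha0 hν1.1, hν2⟩
  -- uniqueness key claim
  have hkey : ∀ ν₁ ν₂ : ℝ, 0 < ν₁ → ν₁ < ν₂ → β ν₁ = β ν₂ → β ν₂ = 1 := by
    intro ν₁ ν₂ h1 h12 heq
    have h2 : 0 < ν₂ := h1.trans h12
    -- difference is nonneg a.e. and has zero integral
    set h : ℝ → ℝ := fun x => Ψhat (ν₂ * f x) - Ψhat (ν₁ * f x) with hh
    have hh_nn : 0 ≤ᵐ[volume.restrict (Ioc (0:ℝ) 1)] h := by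
      filter_upwards [ae_restrict_mem measurableSet_Ioc] with x hx
      exact sub_nonneg.2 (hΨhatMono _ _ (mul_le_mul_of_nonneg_right h12.le (hfnonneg x hx)))
    have hh_int : IntegrableOn h (Ioc (0:ℝ) 1) := (hint ν₂ h2.le).sub (hint ν₁ h1.le)
    have hh_zero : (∫ x in Ioc (0:ℝ) 1, h x) = 0 := by
      rw [hh]
      rw [integral_sub (hint ν₂ h2.le) (hint ν₁ h1.le)]
      rw [← hβ, ← hβ, heq, sub_self]
    have hh_ae : h =ᵐ[volume.restrict (Ioc (0:ℝ) 1)] 0 :=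
      (integral_eq_zero_iff_of_nonneg_ae hh_nn hh_int).1 hh_zero
    -- a.e. x, Ψhat (ν₂ * f x) = 1
    have hone : ∀ᵐ x ∂(volume.restrict (Ioc (0:ℝ) 1)), Ψhat (ν₂ * f x) = 1 := by
      filter_upwards [hh_ae, hfpos] with x hx hfx
      have hxeq : Ψhat (ν₂ * f x) = Ψhat (ν₁ * f x) := by
        have : h x = 0 := hx
        rw [hh] at this; simp only at this; linarith
      set t₁ := ν₁ * f x with ht₁
      set t₂ := ν₂ * f x with ht₂
      have ht₁pos : 0 < t₁ := mul_pos h1 hfx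
      have ht12 : t₁ < t₂ := by
        rw [ht₁, ht₂]; exact mul_lt_mul_of_pos_right h12 hfx
      -- ∫ t₁..t₂ g = 0
      have hadd : (∫ z in (0:ℝ)..t₁, g z) + ∫ z in t₁..t₂, g z = ∫ z in (0:ℝ)..t₂, g z :=
        intervalIntegral.integral_add_adjacent_intervals (hgint 0 t₁) (hgint t₁ t₂)
      have hii : (∫ z in (0:ℝ)..t₂, g z) = ∫ z in (0:ℝ)..t₁, g z := by
        have e1 := hΨhat t₁
        have e2 := hΨhat t₂
        rw [hxeq] at e2
        rw [e1] at e2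
        exact mul_left_cancel₀ (show (1:ℝ)/mΨ ≠ 0 by positivity) e2.symm
      have hzero : (∫ z in t₁..t₂, g z) = 0 := by linarith
      -- find c ∈ Ioc t₁ t₂ with g c = 0
      have hg_ae : g =ᵐ[volume.restrict (Ioc t₁ t₂)] 0 := by
        rw [intervalIntegral.integral_of_le ht12.le] at hzero
        exact (integral_eq_zero_iff_of_nonneg_ae
          (Eventually.of_forall fun z => hgnn z)
          (hgcont.integrableOn_Ioc)).1 hzero
      have hcex : ∃ c ∈ Ioc t₁ t₂, g c = 0 := by
        have hne : (volume.restrict (Ioc t₁ t₂)) ≠ 0 := by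
          rw [Ne, Measure.restrict_eq_zero, Real.volume_Ioc]
          exact (ENNReal.ofReal_pos.2 (sub_pos.2 ht12)).ne'
        have hae2 : ∀ᵐ c ∂(volume.restrict (Ioc t₁ t₂)), c ∈ Ioc t₁ t₂ ∧ g c = 0 := by
          filter_upwards [ae_restrict_mem measurableSet_Ioc, hg_ae] with c hc1 hc2
          exact ⟨hc1, hc2⟩
        haveI : (ae (volume.restrict (Ioc t₁ t₂))).NeBot := ae_neBot.2 hne
        exact hae2.exists
      obtain ⟨c, hcmem, hgc⟩ := hcex
      have hΨ1 : ∀ z, c ≤ z → g z = 0 := by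
        intro z hz
        have h1' : Ψ c = 1 := by
          have : (1:ℝ) - Ψ c = 0 := hgc
          linarith
        have : 1 ≤ Ψ z := h1' ▸ hΨMono hz
        have := hΨle z
        simp only [hg]; linarith
      -- Ψhat t₂ = 1
      have hsplit : mΨ = (∫ z in Ioc (0:ℝ) t₂, g z) + ∫ z in Ioi t₂, g z := by
        rw [hmΨ, ← setIntegral_union (Ioc_disjoint_Ioi le_rfl) measurableSet_Ioi
          (hΨInt.mono_set Ioc_subset_Ioi_self) (hΨInt.mono_set (Ioi_subset_Ioi (ht₁pos.trans ht12).le)),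
          Ioc_union_Ioi_eq_Ioi (ht₁pos.trans ht12).le]
      have htail : (∫ z in Ioi t₂, g z) = 0 := by
        rw [setIntegral_congr_fun measurableSet_Ioi
          (fun z hz => hΨ1 z (hcmem.2.trans (le_of_lt hz)))]
        simp
      rw [hΨhat t₂, intervalIntegral.integral_of_le (ht₁pos.trans ht12).le]
      have : (∫ z in Ioc (0:ℝ) t₂, g z) = mΨ := by linarith
      rw [this]; field_simp
    -- conclude β ν₂ = 1
    rw [hβ]
    rw [integral_congr_ae hone]
    simp [Real.volume_Ioc]
  obtain ⟨ν, hνpos, hνeq⟩ := hex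
  refine ⟨ν, ⟨hνpos, hνeq⟩, ?_⟩
  intro ν' ⟨hν'pos, hν'eq⟩
  by_contra hne
  rcases lt_or_gt_of_ne hne with hlt | hgt
  · have : β ν = 1 := hkey ν' ν hν'pos hlt (by rw [hνeq, hν'eq])
    rw [hνeq] at this; exact absurd this (ne_of_lt hβ₀1)
  · have : β ν' = 1 := hkey ν ν' hνpos hgt (by rw [hνeq, hν'eq])
    rw [hν'eq] at this; exact absurd this (ne_of_lt hβ₀1)
end

section
/- For the Zipf distribution p_{n,i} = i^{-α} / Σ_{j=1}^n j^{-α} with α ∈ [0,1), the tail P̄_n(i) = Σ_{k=i+1}^n p_{n,k} satisfies P̄_n(i) ~ (n^{1-α} - i^{1-α})/n^{1-α} as n → ∞ uniformly on sequences i = i(n) with i(n)/n bounded away from 1; in particular if i(n)/n → c ∈ [0,1) then P̄_n(i(n)) → 1 - c^{1-α}. -/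
open Filter Finset Real

section Aux

variable {β : ℝ}

lemma aux_slope_lower (hβ0 : 0 < β) (hβ1 : β ≤ 1) {a b : ℝ} (ha : 0 ≤ a) (hab : a < b) :
    β * b ^ (β - 1) * (b - a) ≤ b ^ β - a ^ β := by
  obtain ⟨c, hc, hderiv⟩ := exists_hasDerivAt_eq_slope (fun x => x ^ β)
    (fun x => β * x ^ (β - 1)) hab
    ((Real.continuous_rpow_const hβ0.le).continuousOn)
    (fun x hx => Real.hasDerivAt_rpow_const (Or.inl (ne_of_gt (lt_of_le_of_lt ha hx.1))))
  have hc0 : 0 < c := lt_of_le_of_lt ha hc.1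
  have hcb : c ≤ b := hc.2.le
  have h1 : b ^ (β - 1) ≤ c ^ (β - 1) :=
    Real.rpow_le_rpow_of_nonpos hc0 hcb (by linarith)
  have hba : 0 < b - a := by linarith
  have := hderiv
  have h2 : β * c ^ (β - 1) = (b ^ β - a ^ β) / (b - a) := this
  have h3 : β * b ^ (β - 1) ≤ (b ^ β - a ^ β) / (b - a) := by
    rw [← h2]
    exact mul_le_mul_of_nonneg_left h1 hβ0.le
  calc β * b ^ (β - 1) * (b - a) ≤ ((b ^ β - a ^ β) / (b - a)) * (b - a) :=
        mul_le_mul_of_nonneg_right h3 hba.le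
    _ = b ^ β - a ^ β := div_mul_cancel₀ _ hba.ne'

lemma aux_slope_upper (hβ0 : 0 < β) (hβ1 : β ≤ 1) {a b : ℝ} (ha : 0 < a) (hab : a < b) :
    b ^ β - a ^ β ≤ β * a ^ (β - 1) * (b - a) := by
  obtain ⟨c, hc, hderiv⟩ := exists_hasDerivAt_eq_slope (fun x => x ^ β)
    (fun x => β * x ^ (β - 1)) hab
    ((Real.continuous_rpow_const hβ0.le).continuousOn)
    (fun x hx => Real.hasDerivAt_rpow_const (Or.inl (ne_of_gt (lt_trans ha hx.1))))
  have hc0 : 0 < a := ha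
  have h1 : c ^ (β - 1) ≤ a ^ (β - 1) :=
    Real.rpow_le_rpow_of_nonpos ha hc.1.le (by linarith)
  have hba : 0 < b - a := by linarith
  have h2 : β * c ^ (β - 1) = (b ^ β - a ^ β) / (b - a) := hderiv
  have h3 : (b ^ β - a ^ β) / (b - a) ≤ β * a ^ (β - 1) := by
    rw [← h2]
    exact mul_le_mul_of_nonneg_left h1 hβ0.le
  calc b ^ β - a ^ β = ((b ^ β - a ^ β) / (b - a)) * (b - a) := (div_mul_cancel₀ _ hba.ne').symm
    _ ≤ β * a ^ (β - 1) * (b - a) := mul_le_mul_of_nonneg_right h3 hba.le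

lemma aux_telescope (g : ℕ → ℝ) {m n : ℕ} (h : m ≤ n) :
    ∑ k ∈ Finset.Ioc m n, (g k - g (k - 1)) = g n - g m := by
  induction n, h using Nat.le_induction with
  | base => simp
  | succ n hmn ih =>
    rw [Finset.sum_Ioc_succ_top (by omega), ih]
    simp

end Aux

section Bounds

variable {α : ℝ} (hα0 : 0 ≤ α) (hα1 : α < 1)

lemma T_upper (hα0 : 0 ≤ α) (hα1 : α < 1) {m n : ℕ} (h : m ≤ n) :
    (1 - α) * ∑ k ∈ Finset.Ioc m n, ((k : ℝ) ^ (-α)) ≤ (n : ℝ) ^ (1 - α) - (m : ℝ) ^ (1 - α) := by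
  have hβ0 : (0:ℝ) < 1 - α := by linarith
  rw [Finset.mul_sum]
  calc ∑ k ∈ Finset.Ioc m n, (1 - α) * ((k : ℝ) ^ (-α))
      ≤ ∑ k ∈ Finset.Ioc m n, (((k:ℕ) : ℝ) ^ (1 - α) - (((k - 1 : ℕ)) : ℝ) ^ (1 - α)) := by
        apply Finset.sum_le_sum
        intro k hk
        have hk1 : 1 ≤ k := by have := (Finset.mem_Ioc.mp hk).1; omega
        have hcast : (((k - 1 : ℕ)) : ℝ) = (k : ℝ) - 1 := by
          push_cast [Nat.cast_sub hk1]; ring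
        rw [hcast]
        have ha : (0:ℝ) ≤ (k : ℝ) - 1 := by
          have : (1:ℝ) ≤ (k:ℝ) := by exact_mod_cast hk1
          linarith
        have hab : (k : ℝ) - 1 < (k : ℝ) := by linarith
        have := aux_slope_lower hβ0 (by linarith) ha hab
        have he : (1 - α) - 1 = -α := by ring
        rw [he] at this
        calc (1 - α) * (k : ℝ) ^ (-α) = (1 - α) * (k : ℝ) ^ (-α) * ((k:ℝ) - ((k:ℝ) - 1)) := by ring
          _ ≤ (k : ℝ) ^ (1 - α) - ((k:ℝ) - 1) ^ (1 - α) := by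
              have h' : (k:ℝ) - ((k:ℝ) - 1) = 1 := by ring
              rw [h'] at this ⊢; simpa using this
    _ = (n : ℝ) ^ (1 - α) - (m : ℝ) ^ (1 - α) := aux_telescope (fun k => ((k:ℕ):ℝ) ^ (1 - α)) h

lemma T_lower (hα0 : 0 ≤ α) (hα1 : α < 1) {m n : ℕ} (h : m ≤ n) :
    ((n : ℝ) + 1) ^ (1 - α) - ((m : ℝ) + 1) ^ (1 - α)
      ≤ (1 - α) * ∑ k ∈ Finset.Ioc m n, ((k : ℝ) ^ (-α)) := by
  have hβ0 : (0:ℝ) < 1 - α := by linarith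
  rw [Finset.mul_sum]
  have tele := aux_telescope (fun k => (((k:ℕ) + 1 : ℕ) : ℝ) ^ (1 - α)) h
  calc ((n : ℝ) + 1) ^ (1 - α) - ((m : ℝ) + 1) ^ (1 - α)
      = ∑ k ∈ Finset.Ioc m n,
          (((k + 1 : ℕ) : ℝ) ^ (1 - α) - (((k - 1) + 1 : ℕ) : ℝ) ^ (1 - α)) := by
        rw [tele]; push_cast; ring
    _ ≤ ∑ k ∈ Finset.Ioc m n, (1 - α) * ((k : ℝ) ^ (-α)) := by
        apply Finset.sum_le_sum
        intro k hk
        have hk1 : 1 ≤ k := by have := (Finset.mem_Ioc.mp hk).1; omega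
        have hcast : ((k - 1) + 1 : ℕ) = k := by omega
        rw [hcast]
        have ha : (0:ℝ) < (k : ℝ) := by exact_mod_cast hk1
        have hab : (k : ℝ) < (k : ℝ) + 1 := by linarith
        have := aux_slope_upper hβ0 (by linarith) ha hab
        have he : (1 - α) - 1 = -α := by ring
        rw [he] at this
        push_cast
        calc ((k:ℝ) + 1) ^ (1 - α) - (k : ℝ) ^ (1 - α)
            ≤ (1 - α) * (k : ℝ) ^ (-α) * (((k:ℝ) + 1) - (k:ℝ)) := this
          _ = (1 - α) * (k : ℝ) ^ (-α) := by ring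

end Bounds

section Main

variable {α : ℝ}

lemma Icc_one_eq_Ioc_zero (n : ℕ) : Finset.Icc 1 n = Finset.Ioc 0 n := by
  ext x; simp; omega

lemma S_lower (hα0 : 0 ≤ α) (hα1 : α < 1) (n : ℕ) :
    (n : ℝ) ^ (1 - α) - 1 ≤ (1 - α) * ∑ j ∈ Finset.Icc 1 n, ((j : ℝ) ^ (-α)) := by
  have h := T_lower hα0 hα1 (Nat.zero_le n)
  rw [Icc_one_eq_Ioc_zero]
  have h1 : (n : ℝ) ^ (1 - α) ≤ ((n : ℝ) + 1) ^ (1 - α) :=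
    Real.rpow_le_rpow (Nat.cast_nonneg n) (by linarith) (by linarith)
  have h2 : ((0:ℕ) : ℝ) + 1 = 1 := by norm_num
  rw [h2, Real.one_rpow] at h
  linarith

lemma S_upper (hα0 : 0 ≤ α) (hα1 : α < 1) (n : ℕ) :
    (1 - α) * ∑ j ∈ Finset.Icc 1 n, ((j : ℝ) ^ (-α)) ≤ (n : ℝ) ^ (1 - α) := by
  have h := T_upper hα0 hα1 (Nat.zero_le n)
  rw [Icc_one_eq_Ioc_zero]
  have h2 : ((0:ℕ) : ℝ) = 0 := by norm_num
  rw [h2, Real.zero_rpow (by linarith : (1:ℝ) - α ≠ 0)] at h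
  linarith

lemma S_tendsto (hα0 : 0 ≤ α) (hα1 : α < 1) :
    Tendsto (fun n : ℕ =>
        (1 - α) * (∑ j ∈ Finset.Icc 1 n, ((j : ℝ) ^ (-α))) / (n : ℝ) ^ (1 - α))
      atTop (nhds 1) := by
  have hβ0 : (0:ℝ) < 1 - α := by linarith
  have hNtop : Tendsto (fun n : ℕ => (n : ℝ) ^ (1 - α)) atTop atTop :=
    (tendsto_rpow_atTop hβ0).comp tendsto_natCast_atTop_atTop
  have hlow : Tendsto (fun n : ℕ => 1 - ((n : ℝ) ^ (1 - α))⁻¹) atTop (nhds 1) := by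
    simpa using tendsto_const_nhds.sub hNtop.inv_tendsto_atTop
  refine tendsto_of_tendsto_of_tendsto_of_le_of_le' hlow tendsto_const_nhds ?_ ?_
  · filter_upwards [eventually_ge_atTop 1] with n hn
    have hN : (0:ℝ) < (n : ℝ) ^ (1 - α) :=
      Real.rpow_pos_of_pos (by exact_mod_cast hn) _
    rw [le_div_iff₀ hN]
    have := S_lower hα0 hα1 n
    have heq : (1 - ((n : ℝ) ^ (1 - α))⁻¹) * (n : ℝ) ^ (1 - α)
        = (n : ℝ) ^ (1 - α) - 1 := by field_simp
    linarith
  · filter_upwards [eventually_ge_atTop 1] with n hn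
    have hN : (0:ℝ) < (n : ℝ) ^ (1 - α) :=
      Real.rpow_pos_of_pos (by exact_mod_cast hn) _
    rw [div_le_one hN]
    exact S_upper hα0 hα1 n

lemma ratio_tendsto (hα0 : 0 ≤ α) (hα1 : α < 1) {ε : ℝ} (hε0 : 0 < ε) (hε1 : ε < 1)
    (i : ℕ → ℕ) (hin : ∀ n, i n ≤ n)
    (hev : ∀ᶠ n in atTop, (i n : ℝ) ≤ (1 - ε) * n) :
    Tendsto (fun n : ℕ =>
        ((∑ k ∈ Finset.Ioc (i n) n, ((k : ℝ) ^ (-α))) /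
            (∑ j ∈ Finset.Icc 1 n, ((j : ℝ) ^ (-α)))) /
          (((n : ℝ) ^ (1 - α) - (i n : ℝ) ^ (1 - α)) / (n : ℝ) ^ (1 - α)))
      atTop (nhds 1) := by
  have hβ0 : (0:ℝ) < 1 - α := by linarith
  have hNtop : Tendsto (fun n : ℕ => (n : ℝ) ^ (1 - α)) atTop atTop :=
    (tendsto_rpow_atTop hβ0).comp tendsto_natCast_atTop_atTop
  set δ : ℝ := 1 - (1 - ε) ^ (1 - α) with hδdef
  have hδ : 0 < δ := by
    have : (1 - ε) ^ (1 - α) < 1 :=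
      Real.rpow_lt_one (by linarith) (by linarith) hβ0
    simp only [hδdef]; linarith
  -- key eventual facts
  have hkey : ∀ᶠ n : ℕ in atTop,
      δ * (n : ℝ) ^ (1 - α) ≤ (n : ℝ) ^ (1 - α) - (i n : ℝ) ^ (1 - α) := by
    filter_upwards [hev] with n hn
    have h1 : ((i n : ℝ)) ^ (1 - α) ≤ ((1 - ε) * n) ^ (1 - α) :=
      Real.rpow_le_rpow (Nat.cast_nonneg _) hn hβ0.le
    have h2 : ((1 - ε) * n) ^ (1 - α) = (1 - ε) ^ (1 - α) * (n : ℝ) ^ (1 - α) :=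
      Real.mul_rpow (by linarith) (Nat.cast_nonneg n)
    have h3 : (1 - ε) ^ (1 - α) * (n : ℝ) ^ (1 - α) = (1 - δ) * (n : ℝ) ^ (1 - α) := by
      simp [hδdef]
    nlinarith [h1, h2.le, h3.le]
  -- A : the tail sum ratio
  have hA : Tendsto (fun n : ℕ =>
      (1 - α) * (∑ k ∈ Finset.Ioc (i n) n, ((k : ℝ) ^ (-α))) /
        ((n : ℝ) ^ (1 - α) - (i n : ℝ) ^ (1 - α))) atTop (nhds 1) := by
    have hlow : Tendsto (fun n : ℕ => 1 - (δ * (n : ℝ) ^ (1 - α))⁻¹) atTop (nhds 1) := by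
      have : Tendsto (fun n : ℕ => δ * (n : ℝ) ^ (1 - α)) atTop atTop :=
        hNtop.const_mul_atTop hδ
      simpa using tendsto_const_nhds.sub this.inv_tendsto_atTop
    refine tendsto_of_tendsto_of_tendsto_of_le_of_le' hlow tendsto_const_nhds ?_ ?_
    · filter_upwards [hkey, eventually_ge_atTop 1] with n hk hn
      have hN : (0:ℝ) < (n : ℝ) ^ (1 - α) :=
        Real.rpow_pos_of_pos (by exact_mod_cast hn) _
      have hδN : (0:ℝ) < δ * (n : ℝ) ^ (1 - α) := mul_pos hδ hN
      have hD : (0:ℝ) < (n : ℝ) ^ (1 - α) - (i n : ℝ) ^ (1 - α) := lt_of_lt_of_le hδN hk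
      -- lower bound on the tail sum
      have hT : (n : ℝ) ^ (1 - α) - (i n : ℝ) ^ (1 - α) - 1
          ≤ (1 - α) * ∑ k ∈ Finset.Ioc (i n) n, ((k : ℝ) ^ (-α)) := by
        have h := T_lower hα0 hα1 (hin n)
        have h1 : (n : ℝ) ^ (1 - α) ≤ ((n : ℝ) + 1) ^ (1 - α) :=
          Real.rpow_le_rpow (Nat.cast_nonneg n) (by linarith) hβ0.le
        have h2 : ((i n : ℝ) + 1) ^ (1 - α) ≤ (i n : ℝ) ^ (1 - α) + 1 := by
          rcases Nat.eq_zero_or_pos (i n) with h0 | h0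
          · rw [h0]
            simp [Real.zero_rpow (by linarith : (1:ℝ) - α ≠ 0), Real.one_rpow]
          · have ha : (0:ℝ) < (i n : ℝ) := by exact_mod_cast h0
            have := aux_slope_upper hβ0 (by linarith) ha (by linarith : (i n : ℝ) < (i n : ℝ) + 1)
            have he : (1 - α) - 1 = -α := by ring
            rw [he] at this
            have hle1 : ((i n : ℝ)) ^ (-α) ≤ 1 :=
              Real.rpow_le_one_of_one_le_of_nonpos (by exact_mod_cast h0) (by linarith)
            nlinarith
        linarith
      rw [le_div_iff₀ hD]
      have hinv : (δ * (n : ℝ) ^ (1 - α))⁻¹ *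
          ((n : ℝ) ^ (1 - α) - (i n : ℝ) ^ (1 - α)) ≥ 1 * 1 := by
        rw [ge_iff_le, one_mul, ← div_eq_inv_mul, le_div_iff₀ hδN]
        linarith
      nlinarith
    · filter_upwards [hkey, eventually_ge_atTop 1] with n hk hn
      have hN : (0:ℝ) < (n : ℝ) ^ (1 - α) :=
        Real.rpow_pos_of_pos (by exact_mod_cast hn) _
      have hD : (0:ℝ) < (n : ℝ) ^ (1 - α) - (i n : ℝ) ^ (1 - α) :=
        lt_of_lt_of_le (mul_pos hδ hN) hk
      rw [div_le_one hD]
      exact T_upper hα0 hα1 (hin n)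
  have hB := S_tendsto hα0 hα1
  have hBA : Tendsto (fun n : ℕ =>
      ((1 - α) * (∑ k ∈ Finset.Ioc (i n) n, ((k : ℝ) ^ (-α))) /
        ((n : ℝ) ^ (1 - α) - (i n : ℝ) ^ (1 - α))) *
      ((1 - α) * (∑ j ∈ Finset.Icc 1 n, ((j : ℝ) ^ (-α))) / (n : ℝ) ^ (1 - α))⁻¹)
      atTop (nhds 1) := by
    simpa using hA.mul (hB.inv₀ one_ne_zero)
  refine hBA.congr' ?_
  filter_upwards [hkey, hNtop.eventually_gt_atTop 1, eventually_ge_atTop 1] with n hk hN1 hn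
  have hN : (0:ℝ) < (n : ℝ) ^ (1 - α) := by linarith
  have hD : (0:ℝ) < (n : ℝ) ^ (1 - α) - (i n : ℝ) ^ (1 - α) :=
    lt_of_lt_of_le (mul_pos hδ hN) hk
  have hS : (0:ℝ) < ∑ j ∈ Finset.Icc 1 n, ((j : ℝ) ^ (-α)) := by
    have h := S_lower hα0 hα1 n
    nlinarith
  field_simp

end Main

/-- Zipf tail asymptotics for `α ∈ [0,1)`:
`P̄_n(i) ~ (n^{1-α} - i^{1-α})/n^{1-α}` uniformly over sequences `i(n)` with
`i(n)/n` bounded away from `1`; in particular if `i(n)/n → c ∈ [0,1)` then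
`P̄_n(i(n)) → 1 - c^{1-α}`. -/
theorem stmt_14 (α : ℝ) (hα0 : 0 ≤ α) (hα1 : α < 1)
    (Pbar : ℕ → ℕ → ℝ)
    (hPbar : ∀ n m, Pbar n m =
      (∑ k ∈ Finset.Ioc m n, ((k : ℝ) ^ (-α))) /
        (∑ j ∈ Finset.Icc 1 n, ((j : ℝ) ^ (-α)))) :
    (∀ ε > (0:ℝ), ∀ i : ℕ → ℕ, (∀ n, i n ≤ n) →
      (∀ n, (i n : ℝ) ≤ (1 - ε) * n) →
      Tendsto (fun n : ℕ =>
          Pbar n (i n) /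
            (((n : ℝ) ^ (1 - α) - (i n : ℝ) ^ (1 - α)) / (n : ℝ) ^ (1 - α)))
        atTop (nhds 1)) ∧
    (∀ i : ℕ → ℕ, ∀ c ∈ Set.Ico (0:ℝ) 1, (∀ n, i n ≤ n) →
      Tendsto (fun n : ℕ => (i n : ℝ) / n) atTop (nhds c) →
      Tendsto (fun n : ℕ => Pbar n (i n)) atTop (nhds (1 - c ^ (1 - α)))) := by

  have hβ0 : (0:ℝ) < 1 - α := by linarith
  constructor
  · intro ε hε i hin hbound
    set ε' : ℝ := min ε (1/2) with hε'def
    have hε'0 : 0 < ε' := lt_min hε (by norm_num)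
    have hε'1 : ε' < 1 := lt_of_le_of_lt (min_le_right _ _) (by norm_num)
    have hev : ∀ᶠ n : ℕ in atTop, (i n : ℝ) ≤ (1 - ε') * n := by
      filter_upwards with n
      calc (i n : ℝ) ≤ (1 - ε) * n := hbound n
        _ ≤ (1 - ε') * n := by
            apply mul_le_mul_of_nonneg_right _ (Nat.cast_nonneg n)
            have := min_le_left ε (1/2); linarith
    have h := ratio_tendsto hα0 hα1 hε'0 hε'1 i hin hev
    simpa only [hPbar] using h
  · intro i c hc hin hlim
    obtain ⟨hc0, hc1⟩ := hc
    set ε : ℝ := (1 - c)/2 with hεdef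
    have hε0 : 0 < ε := by simp only [hεdef]; linarith
    have hε1 : ε < 1 := by simp only [hεdef]; linarith
    have hev : ∀ᶠ n : ℕ in atTop, (i n : ℝ) ≤ (1 - ε) * n := by
      have h1 : ∀ᶠ n : ℕ in atTop, (i n : ℝ)/n < 1 - ε :=
        hlim.eventually_lt_const (by simp only [hεdef]; linarith)
      filter_upwards [h1, eventually_ge_atTop 1] with n hn hn1
      have hnpos : (0:ℝ) < n := by exact_mod_cast hn1
      rw [div_lt_iff₀ hnpos] at hn
      linarith
    have hR := ratio_tendsto hα0 hα1 hε0 hε1 i hin hev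
    have htargetlim : Tendsto (fun n : ℕ =>
        ((n : ℝ) ^ (1 - α) - (i n : ℝ) ^ (1 - α)) / (n : ℝ) ^ (1 - α))
        atTop (nhds (1 - c ^ (1 - α))) := by
      have hcont : Tendsto (fun n : ℕ => ((i n : ℝ)/n) ^ (1 - α))
          atTop (nhds (c ^ (1 - α))) :=
        ((Real.continuousAt_rpow_const c (1 - α) (Or.inr hβ0.le)).tendsto).comp hlim
      have h2 : Tendsto (fun n : ℕ => 1 - ((i n : ℝ)/n) ^ (1 - α))
          atTop (nhds (1 - c ^ (1 - α))) := tendsto_const_nhds.sub hcont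
      refine h2.congr' ?_
      filter_upwards [eventually_ge_atTop 1] with n hn1
      have hnpos : (0:ℝ) < n := by exact_mod_cast hn1
      have hN : (0:ℝ) < (n:ℝ) ^ (1 - α) := Real.rpow_pos_of_pos hnpos _
      rw [Real.div_rpow (Nat.cast_nonneg _) (Nat.cast_nonneg _)]
      field_simp
    have hne : (1:ℝ) - c ^ (1 - α) ≠ 0 := by
      have : c ^ (1 - α) < 1 := Real.rpow_lt_one hc0 hc1 hβ0
      exact ne_of_gt (by linarith)
    have hevne : ∀ᶠ n : ℕ in atTop,
        ((n : ℝ) ^ (1 - α) - (i n : ℝ) ^ (1 - α)) / (n : ℝ) ^ (1 - α) ≠ 0 :=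
      htargetlim.eventually_ne hne
    have hmul := hR.mul htargetlim
    rw [one_mul] at hmul
    apply Filter.Tendsto.congr' _ hmul
    filter_upwards [hevne] with n hn
    rw [div_mul_cancel₀ _ hn, ← hPbar]
end
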